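/- Suppose f is a real-valued function defined on an interval I containing the origin such that the restriction of f to I ∩ [0,∞) is convex and f(−x) = −f(x) whenever both x and −x belong to I. Then for every family of points a_1, …, a_n in I (n ≥ 1) such that Σ_{k=1}^n a_k + (n−2)·min{a_1, …, a_n} ≥ 0, one has f( (1/n) Σ_{k=1}^n a_k ) ≤ (1/n) Σ_{k=1}^n f(a_k). -/

import Mathlib

open Finset

/-- Corollary 3: for an odd function convex on `I ∩ [0, ∞)`, the equal-weights
Jensen inequality holds under the weaker constraint
`Σ a_k + (n - 2) · min_k a_k ≥ 0`. -/
theorem jensen_discrete_odd_equal_weights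
    (I : Set ℝ) (hI : Convex ℝ I) (h0 : (0 : ℝ) ∈ I)
    (f : ℝ → ℝ)
    (hconv : ConvexOn ℝ (I ∩ Set.Ici 0) f)
    (hodd : ∀ x : ℝ, x ∈ I → -x ∈ I → f (-x) = -f x)
    (n : ℕ) (hn : 1 ≤ n)
    (a : Fin n → ℝ) (ha : ∀ k, a k ∈ I)
    (hmin : 0 ≤ (∑ k, a k) +
      ((n : ℝ) - 2) * Finset.univ.inf' (Finset.univ_nonempty_iff.mpr ⟨⟨0, hn⟩⟩) a) :
    f ((1 / (n : ℝ)) * ∑ k, a k) ≤ (1 / (n : ℝ)) * ∑ k, f (a k) := by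
  have hnpos : (0:ℝ) < n := by exact_mod_cast hn
  -- f 0 = 0
  have hf0 : f 0 = 0 := by
    have h := hodd 0 h0 (by simpa using h0)
    simp only [neg_zero] at h
    linarith
  -- Icc 0 y ⊆ I for y ∈ I nonneg
  have hIcc : ∀ y : ℝ, y ∈ I → 0 ≤ y → Set.Icc (0:ℝ) y ⊆ I := by
    intro y hy hy0
    rw [← segment_eq_Icc hy0]
    exact hI.segment_subset h0 hy
  -- superadditivity on the nonnegative part
  have hsuper : ∀ u v : ℝ, 0 ≤ u → 0 ≤ v → u + v ∈ I → f u + f v ≤ f (u + v) := by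
    intro u v hu hv hm
    rcases eq_or_lt_of_le (by linarith : (0:ℝ) ≤ u + v) with he | hpos
    · have hu0 : u = 0 := by linarith
      have hv0 : v = 0 := by linarith
      simp [hu0, hv0, hf0]
    · have hmem : u + v ∈ I ∩ Set.Ici 0 := ⟨hm, Set.mem_Ici.mpr (by linarith)⟩
      have h0m : (0:ℝ) ∈ I ∩ Set.Ici 0 := ⟨h0, Set.self_mem_Ici⟩
      have ew : u / (u+v) + v / (u+v) = 1 := by
        rw [← add_div, div_self hpos.ne']
      have ew' : v / (u+v) + u / (u+v) = 1 := by
        rw [← add_div, add_comm, div_self hpos.ne']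
      have h1 := hconv.2 hmem h0m (div_nonneg hu hpos.le) (div_nonneg hv hpos.le) ew
      have h2 := hconv.2 hmem h0m (div_nonneg hv hpos.le) (div_nonneg hu hpos.le) ew'
      have e1 : u / (u+v) * (u+v) = u := by field_simp
      have e2 : v / (u+v) * (u+v) = v := by field_simp
      simp only [smul_eq_mul, mul_zero, add_zero, hf0] at h1 h2
      rw [e1] at h1
      rw [e2] at h2
      have hcomb := add_le_add h1 h2
      rw [← add_mul, ew, one_mul] at hcomb
      linarith
  -- pairing lemma
  have hpair : ∀ x y : ℝ, x ∈ I → y ∈ I → x ≤ 0 → 0 ≤ x + y → f (x + y) ≤ f x + f y := by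
    intro x y hx hy hx0 hxy
    have hyn : 0 ≤ y := by linarith
    have hseg := hIcc y hy hyn
    have hnx : -x ∈ I := hseg ⟨by linarith, by linarith⟩
    have hoddx := hodd x hx hnx
    have hs := hsuper (-x) (x + y) (by linarith) hxy
      (by have e : -x + (x + y) = y := by ring
          rw [e]; exact hy)
    have e : -x + (x + y) = y := by ring
    rw [e] at hs
    linarith
  -- equal-weights Jensen for nonnegative entries
  have hjensen : ∀ b : Fin n → ℝ, (∀ k, b k ∈ I) → (∀ k, 0 ≤ b k) →
      (n:ℝ) * f ((1/(n:ℝ)) * ∑ k, b k) ≤ ∑ k, f (b k) := by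
    intro b hbI hb0
    have hw : ∑ _i : Fin n, (1/(n:ℝ)) = 1 := by
      rw [Finset.sum_const, card_univ, Fintype.card_fin, nsmul_eq_mul]
      field_simp
    have h := hconv.map_sum_le (t := univ) (w := fun _ => 1/(n:ℝ)) (p := b)
      (fun i _ => by positivity) hw (fun i _ => ⟨hbI i, hb0 i⟩)
    have e1 : ∑ i, (1/(n:ℝ)) • b i = (1/(n:ℝ)) * ∑ i, b i := by
      rw [← Finset.smul_sum]; simp [smul_eq_mul]
    have e2 : ∑ i, (1/(n:ℝ)) • f (b i) = (1/(n:ℝ)) * ∑ i, f (b i) := by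
      rw [← Finset.smul_sum]; simp [smul_eq_mul]
    rw [e1, e2] at h
    calc (n:ℝ) * f ((1/(n:ℝ)) * ∑ k, b k) ≤ (n:ℝ) * ((1/(n:ℝ)) * ∑ i, f (b i)) :=
          mul_le_mul_of_nonneg_left h hnpos.le
      _ = ∑ i, f (b i) := by field_simp
  -- trivial case n = 1
  rcases eq_or_lt_of_le hn with h1 | hn2
  · have : n = 1 := h1.symm
    subst this
    simp [Fin.sum_univ_one]
  · -- n ≥ 2
    have hn2' : 2 ≤ n := hn2
    have hn2r : (2:ℝ) ≤ n := by exact_mod_cast hn2'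
    set m := Finset.univ.inf' (Finset.univ_nonempty_iff.mpr ⟨⟨0, hn⟩⟩) a with hm
    set S := ∑ k, a k with hS
    have ham : ∀ k, m ≤ a k := fun k => Finset.inf'_le a (mem_univ k)
    -- main induction: remove negative entries one at a time
    have key : ∀ N : ℕ, ∀ b : Fin n → ℝ, (∀ k, b k ∈ I) → (∀ k, m ≤ b k) →
        (∑ k, b k = S) → ((univ.filter fun k => b k < 0).card ≤ N) →
        (n:ℝ) * f ((1/(n:ℝ)) * S) ≤ ∑ k, f (b k) := by
      intro N
      induction N with
      | zero =>
        intro b hbI hbm hbS hcard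
        have hb0 : ∀ k, 0 ≤ b k := by
          intro k
          by_contra hc
          push_neg at hc
          have hk : k ∈ univ.filter fun k => b k < 0 := by simp [hc]
          have := Finset.card_pos.mpr ⟨k, hk⟩
          omega
        have := hjensen b hbI hb0
        rwa [hbS] at this
      | succ N ih =>
        intro b hbI hbm hbS hcard
        by_cases hneg : ∃ j, b j < 0
        · obtain ⟨j, hj⟩ := hneg
          have hmneg : m < 0 := lt_of_le_of_lt (hbm j) hj
          have hcarde : (univ.erase j).card = n - 1 := by
            rw [Finset.card_erase_of_mem (mem_univ j), card_univ, Fintype.card_fin]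
          have hne : (univ.erase j).Nonempty := by
            rw [← Finset.card_pos, hcarde]; omega
          have hsum_erase : ∑ k ∈ univ.erase j, b k = S - b j := by
            have := Finset.add_sum_erase univ b (mem_univ j)
            rw [hbS] at this
            linarith
          -- key bound: S + (n-2) * b j ≥ 0
          have hSb : 0 ≤ S + ((n:ℝ) - 2) * b j := by
            have h1 : ((n:ℝ) - 2) * m ≤ ((n:ℝ) - 2) * b j :=
              mul_le_mul_of_nonneg_left (hbm j) (by linarith)
            linarith [hmin]
          -- find a partner i with b i ≥ -(b j)
          have hex : ∃ i ∈ univ.erase j, -(b j) ≤ b i := by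
            apply Finset.exists_le_of_sum_le hne
            rw [Finset.sum_const, hcarde, nsmul_eq_mul, hsum_erase]
            have : ((n - 1 : ℕ) : ℝ) = (n:ℝ) - 1 := by
              push_cast [Nat.cast_sub (by omega : 1 ≤ n)]; ring
            rw [this]
            nlinarith [hSb]
          obtain ⟨i, hit, hib⟩ := hex
          have hij : i ≠ j := Finset.ne_of_mem_erase hit
          set b' : Fin n → ℝ := Function.update (Function.update b j 0) i (b j + b i) with hb'
          have hb'j : b' j = 0 := by
            rw [hb', Function.update_of_ne (Ne.symm hij), Function.update_self]
          have hb'i : b' i = b j + b i := by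
            rw [hb', Function.update_self]
          have hb'k : ∀ k, k ≠ i → k ≠ j → b' k = b k := by
            intro k hki hkj
            rw [hb', Function.update_of_ne hki, Function.update_of_ne hkj]
          have hbi0 : 0 ≤ b i := le_trans (by linarith) hib
          have hsumI : 0 ≤ b j + b i := by linarith
          have hbiI : b j + b i ∈ I := hIcc (b i) (hbI i) hbi0 ⟨hsumI, by linarith⟩
          -- splitting sums
          have split : ∀ c : Fin n → ℝ,
              ∑ k, c k = c i + (c j + ∑ k ∈ (univ.erase i).erase j, c k) := by
            intro c
            rw [Finset.add_sum_erase _ c (Finset.mem_erase.mpr ⟨hij.symm, mem_univ j⟩),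
              Finset.add_sum_erase _ c (mem_univ i)]
          have hrest : ∀ g : ℝ → ℝ, ∑ k ∈ (univ.erase i).erase j, g (b' k)
              = ∑ k ∈ (univ.erase i).erase j, g (b k) := by
            intro g
            apply Finset.sum_congr rfl
            intro k hk
            have hk1 : k ≠ j := (Finset.mem_erase.mp hk).1
            have hk2 : k ≠ i := (Finset.mem_erase.mp (Finset.mem_erase.mp hk).2).1
            rw [hb'k k hk2 hk1]
          -- properties of b'
          have hb'I : ∀ k, b' k ∈ I := by
            intro k
            by_cases hki : k = i
            · subst hki; rw [hb'i]; exact hbiI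
            · by_cases hkj : k = j
              · subst hkj; rw [hb'j]; exact h0
              · rw [hb'k k hki hkj]; exact hbI k
          have hb'm : ∀ k, m ≤ b' k := by
            intro k
            by_cases hki : k = i
            · subst hki; rw [hb'i]; linarith
            · by_cases hkj : k = j
              · subst hkj; rw [hb'j]; linarith
              · rw [hb'k k hki hkj]; exact hbm k
          have hb'S : ∑ k, b' k = S := by
            have e1 := split b'
            have e2 := split b
            have hrest0 : ∑ k ∈ (univ.erase i).erase j, b' k
                = ∑ k ∈ (univ.erase i).erase j, b k := hrest id
            rw [hb'i, hb'j, hrest0] at e1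
            rw [e1]
            rw [e2] at hbS
            linarith
          have hb'card : ((univ.filter fun k => b' k < 0).card ≤ N) := by
            have hsub : (univ.filter fun k => b' k < 0) ⊆ (univ.filter fun k => b k < 0).erase j := by
              intro k hk
              simp only [Finset.mem_filter, mem_univ, true_and] at hk
              by_cases hki : k = i
              · exfalso; subst hki; rw [hb'i] at hk; linarith
              · by_cases hkj : k = j
                · exfalso; subst hkj; rw [hb'j] at hk; linarith
                · rw [hb'k k hki hkj] at hk
                  exact Finset.mem_erase.mpr ⟨hkj, by simp [hk]⟩
            have hjmem : j ∈ univ.filter fun k => b k < 0 := by simp [hj]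
            have := Finset.card_le_card hsub
            rw [Finset.card_erase_of_mem hjmem] at this
            have hpos := Finset.card_pos.mpr ⟨j, hjmem⟩
            omega
          have hmain := ih b' hb'I hb'm hb'S hb'card
          -- compare sums of f
          have hcompare : ∑ k, f (b' k) ≤ ∑ k, f (b k) := by
            have e1 := split (fun k => f (b' k))
            have e2 := split (fun k => f (b k))
            rw [hb'i, hb'j, hrest f] at e1
            have hp := hpair (b j) (b i) (hbI j) (hbI i) hj.le hsumI
            rw [e1, e2]
            rw [hf0]
            linarith
          linarith
        · push_neg at hneg
          have : (univ.filter fun k => b k < 0) = ∅ := by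
            apply Finset.filter_eq_empty_iff.mpr
            intro k _
            exact not_lt.mpr (not_lt.mp (by exact fun h => absurd h (not_lt.mpr (hneg k))))
          apply ih b hbI hbm hbS
          rw [this]
          simp
    have hkey := key n a ha ham rfl (le_trans (Finset.card_filter_le _ _) (by simp))
    calc f ((1/(n:ℝ)) * S) = (1/(n:ℝ)) * ((n:ℝ) * f ((1/(n:ℝ)) * S)) := by field_simp
      _ ≤ (1/(n:ℝ)) * ∑ k, f (a k) :=
          mul_le_mul_of_nonneg_left hkey (by positivity)
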